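/- Let p be an odd prime and D an integer, and let R be the quotient ring (ℤ/pℤ)[x]/(x² − D). Then the image of SL₂(ℤ/pℤ) in SL₂(R), under the group homomorphism induced by the canonical ring homomorphism ℤ/pℤ → R, has index p³ − (D/p)·p, where (D/p) denotes the Legendre symbol. -/

import Mathlib

open Polynomial

open Matrix

namespace SL2Aux


variable {F : Type*} [Field F] [Fintype F] [DecidableEq F]

noncomputable def slEquivKer : SpecialLinearGroup (Fin 2) F ≃* (GeneralLinearGroup.det (n := Fin 2) (R := F)).ker where
  toFun M := ⟨SpecialLinearGroup.toGL M, by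
    ext
    simp [M.2]⟩
  invFun g := ⟨(g : GL (Fin 2) F), by
    have := g.2
    simp only [MonoidHom.mem_ker] at this
    have := congrArg Units.val this
    simpa using this⟩
  left_inv M := rfl
  right_inv g := by
    ext
    rfl
  map_mul' M N := by
    ext
    rfl

theorem det_GL_surj : Function.Surjective (GeneralLinearGroup.det (n := Fin 2) (R := F)) := by
  intro u
  refine ⟨⟨Matrix.diagonal ![u.val, 1], Matrix.diagonal ![u.inv, 1], ?_, ?_⟩, ?_⟩
  · rw [Matrix.diagonal_mul_diagonal]
    convert Matrix.diagonal_one using 2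
    ext i
    fin_cases i <;> simp
  · rw [Matrix.diagonal_mul_diagonal]
    convert Matrix.diagonal_one using 2
    ext i
    fin_cases i <;> simp
  · ext
    simp [Matrix.det_diagonal, Fin.prod_univ_two]

theorem card_SL2 : Nat.card (SpecialLinearGroup (Fin 2) F) = Fintype.card F ^ 3 - Fintype.card F := by
  have h1 : Nat.card (GL (Fin 2) F) = Nat.card Fˣ * Nat.card (SpecialLinearGroup (Fin 2) F) := by
    rw [Subgroup.card_eq_card_quotient_mul_card_subgroup (GeneralLinearGroup.det (n := Fin 2) (R := F)).ker]
    congr 1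
    · exact Nat.card_congr (QuotientGroup.quotientKerEquivOfSurjective _ det_GL_surj).toEquiv
    · exact (Nat.card_congr (slEquivKer (F := F)).toEquiv).symm
  have h2 := Matrix.card_GL_field (𝔽 := F) (n := 2)
  rw [Fin.prod_univ_two] at h2
  set q := Fintype.card F with hq
  have hq2 : 2 ≤ q := Fintype.one_lt_card
  have hcu : Nat.card Fˣ = q - 1 := by
    rw [Nat.card_eq_fintype_card, Fintype.card_units, hq]
  rw [h2, hcu] at h1
  norm_num at h1
  have key : (q ^ 2 - 1) * (q ^ 2 - q) = (q - 1) * (q ^ 3 - q) := by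
    have h0 : 1 ≤ q ^ 2 := Nat.one_le_pow _ _ (by omega)
    have ha : q ≤ q ^ 2 := by nlinarith
    have hb : q ≤ q ^ 3 := by nlinarith
    zify [h0, ha, hb, show 1 ≤ q by omega]
    ring
  rw [key] at h1
  rw [Nat.card_eq_fintype_card]
  exact Nat.eq_of_mul_eq_mul_left (by omega) h1.symm



variable {n : Type*} [DecidableEq n] [Fintype n]

theorem map_inj {R S : Type*} [CommRing R] [CommRing S] {f : R →+* S}
    (hf : Function.Injective f) :
    Function.Injective (SpecialLinearGroup.map (n := n) f) := by
  intro M N h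
  apply Matrix.SpecialLinearGroup.ext
  intro i j
  have := congrArg (fun P : SpecialLinearGroup n S => (P : Matrix n n S) i j) h
  exact hf this

/-- `SL n` of a ring isomorphism. -/
noncomputable def mapEquiv {R S : Type*} [CommRing R] [CommRing S] (e : R ≃+* S) :
    SpecialLinearGroup n R ≃* SpecialLinearGroup n S :=
  { SpecialLinearGroup.map (e : R →+* S) with
    invFun := SpecialLinearGroup.map (e.symm : S →+* R)
    left_inv := fun M => by
      apply Matrix.SpecialLinearGroup.ext
      intro i j
      simp
    right_inv := fun M => by
      apply Matrix.SpecialLinearGroup.ext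
      intro i j
      simp }

/-- `SL n (A × B) ≃* SL n A × SL n B`. -/
def prodEquiv (A B : Type*) [CommRing A] [CommRing B] :
    SpecialLinearGroup n (A × B) ≃* SpecialLinearGroup n A × SpecialLinearGroup n B :=
  { (SpecialLinearGroup.map (n := n) (RingHom.fst A B)).prod
      (SpecialLinearGroup.map (n := n) (RingHom.snd A B)) with
    invFun := fun P => ⟨Matrix.of fun i j => ((P.1 : Matrix n n A) i j, (P.2 : Matrix n n B) i j), by
      refine Prod.ext ?_ ?_
      · show RingHom.fst A B (Matrix.det _) = 1
        rw [RingHom.map_det]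
        have : (RingHom.fst A B).mapMatrix (Matrix.of fun i j => ((P.1 : Matrix n n A) i j, (P.2 : Matrix n n B) i j)) = (P.1 : Matrix n n A) := by
          ext i j; rfl
        rw [this, P.1.2]
      · show RingHom.snd A B (Matrix.det _) = 1
        rw [RingHom.map_det]
        have : (RingHom.snd A B).mapMatrix (Matrix.of fun i j => ((P.1 : Matrix n n A) i j, (P.2 : Matrix n n B) i j)) = (P.2 : Matrix n n B) := by
          ext i j; rfl
        rw [this, P.2.2]⟩
    left_inv := fun M => by
      apply Matrix.SpecialLinearGroup.ext
      intro i j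
      rfl
    right_inv := fun P => by
      refine Prod.ext ?_ ?_ <;>
      · apply Matrix.SpecialLinearGroup.ext
        intro i j
        rfl }




variable {K : Type*} [Field K]

theorem decomp (d : K) (r : AdjoinRoot (X ^ 2 - C d)) :
    ∃ a b : K, r = AdjoinRoot.of _ a + AdjoinRoot.root _ * AdjoinRoot.of _ b := by
  have hm : (X ^ 2 - C d).Monic := monic_X_pow_sub_C d two_ne_zero
  obtain ⟨g, hg⟩ := AdjoinRoot.mk_surjective r
  have hdeg : (g %ₘ (X ^ 2 - C d)).degree ≤ 1 := by
    have h2 : (X ^ 2 - C d).degree = 2 := by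
      simpa using degree_X_pow_sub_C (by norm_num : 0 < 2) d
    have := degree_modByMonic_lt g hm
    rw [h2] at this
    exact Order.le_of_lt_succ (by exact_mod_cast this)
  refine ⟨(g %ₘ (X ^ 2 - C d)).coeff 0, (g %ₘ (X ^ 2 - C d)).coeff 1, ?_⟩
  have hmk : AdjoinRoot.mk (X ^ 2 - C d) g = AdjoinRoot.mk (X ^ 2 - C d) (g %ₘ (X ^ 2 - C d)) := by
    rw [AdjoinRoot.mk_eq_mk]
    rw [modByMonic_eq_sub_mul_div g (X ^ 2 - C d)]
    exact ⟨g /ₘ (X ^ 2 - C d), by ring⟩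
  rw [← hg, hmk]
  conv_lhs => rw [eq_X_add_C_of_degree_le_one hdeg]
  have hof : ∀ a : K, AdjoinRoot.of (X ^ 2 - C d) a = AdjoinRoot.mk (X ^ 2 - C d) (C a) :=
    fun a => rfl
  rw [hof, hof, map_add, _root_.map_mul, AdjoinRoot.mk_X]
  ring

theorem root_sq (d : K) : (AdjoinRoot.root (X ^ 2 - C d)) ^ 2 = AdjoinRoot.of _ d := by
  have := AdjoinRoot.eval₂_root (X ^ 2 - C d)
  simp only [eval₂_sub, eval₂_pow, eval₂_X, eval₂_C] at this
  linear_combination this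

theorem root_ne_zero' (d : K) : AdjoinRoot.root (X ^ 2 - C d) ≠ 0 := by
  have hm : (X ^ 2 - C d).Monic := monic_X_pow_sub_C d two_ne_zero
  have : AdjoinRoot.root (X ^ 2 - C d) = AdjoinRoot.mk _ X := rfl
  rw [this]
  apply AdjoinRoot.mk_ne_zero_of_degree_lt hm X_ne_zero
  rw [degree_X, degree_X_pow_sub_C (by norm_num : 0 < 2) d]
  norm_num

theorem cancel_root (d : K) {a : K}
    (h : AdjoinRoot.root (X ^ 2 - C d) * AdjoinRoot.of _ a = 0) : a = 0 := by
  by_contra ha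
  apply root_ne_zero' d
  have h2 : AdjoinRoot.root (X ^ 2 - C d) * (AdjoinRoot.of _ a * AdjoinRoot.of _ a⁻¹) = 0 := by
    rw [← mul_assoc, h, zero_mul]
  rwa [← _root_.map_mul, mul_inv_cancel₀ ha, _root_.map_one, mul_one] at h2

section Case0

variable (K)

/-- the evaluation-at-0 map for `d = 0`. -/
noncomputable def pi0 : AdjoinRoot (X ^ 2 - C (0 : K)) →ₐ[K] K :=
  AdjoinRoot.liftAlgHom _ (Algebra.ofId K K) 0 (by simp)

theorem pi0_root : pi0 K (AdjoinRoot.root (X ^ 2 - C (0 : K))) = 0 := by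
  unfold pi0
  apply AdjoinRoot.liftAlgHom_root

theorem pi0_of (a : K) : pi0 K (AdjoinRoot.of _ a) = a := by
  unfold pi0
  rw [AdjoinRoot.liftAlgHom_of]
  simp

theorem root_sq0 : (AdjoinRoot.root (X ^ 2 - C (0 : K))) ^ 2 = 0 := by
  rw [root_sq]
  exact map_zero _

/-- parametrization of the kernel. -/
noncomputable def kerParam (t : K × K × K) :
    SpecialLinearGroup (Fin 2) (AdjoinRoot (X ^ 2 - C (0 : K))) := by
  refine ⟨!![1 + AdjoinRoot.root _ * AdjoinRoot.of _ t.1,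
      AdjoinRoot.root _ * AdjoinRoot.of _ t.2.1;
      AdjoinRoot.root _ * AdjoinRoot.of _ t.2.2,
      1 - AdjoinRoot.root _ * AdjoinRoot.of _ t.1], ?_⟩
  rw [det_fin_two_of]
  have h2 := root_sq0 K
  set x := AdjoinRoot.root (X ^ 2 - C (0 : K))
  set A := AdjoinRoot.of (X ^ 2 - C (0 : K)) t.1
  set B := AdjoinRoot.of (X ^ 2 - C (0 : K)) t.2.1
  set Cc := AdjoinRoot.of (X ^ 2 - C (0 : K)) t.2.2
  have : (1 + x * A) * (1 - x * A) - x * B * (x * Cc) = 1 - x ^ 2 * (A * A + B * Cc) := by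
    ring
  rw [this, h2]
  ring

theorem finite_adjoinRoot [Finite K] (d : K) : Finite (AdjoinRoot (X ^ 2 - C d)) := by
  have hm : (X ^ 2 - C d).Monic := monic_X_pow_sub_C d two_ne_zero
  have := Module.Finite.of_basis (AdjoinRoot.powerBasisAux' hm)
  exact Module.finite_of_finite K

theorem kerParam_mem (t : K × K × K) :
    (SpecialLinearGroup.map (n := Fin 2) (pi0 K).toRingHom) (kerParam K t) = 1 := by
  apply Matrix.SpecialLinearGroup.ext
  intro i j
  show pi0 K ((kerParam K t : Matrix (Fin 2) (Fin 2) _) i j) = _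
  fin_cases i <;> fin_cases j <;>
    simp [kerParam, pi0_root, pi0_of, Matrix.one_apply]

theorem card_SL2_case0 [Fintype K] :
    Nat.card (SpecialLinearGroup (Fin 2) (AdjoinRoot (X ^ 2 - C (0 : K)))) =
      Fintype.card K ^ 3 * Nat.card (SpecialLinearGroup (Fin 2) K) := by
  classical
  have hfinR : Finite (AdjoinRoot (X ^ 2 - C (0 : K))) := finite_adjoinRoot K 0
  set πm := SpecialLinearGroup.map (n := Fin 2) (pi0 K).toRingHom with hπm
  have hsurj : Function.Surjective πm := by
    intro M
    refine ⟨SpecialLinearGroup.map (AdjoinRoot.of _) M, ?_⟩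
    apply Matrix.SpecialLinearGroup.ext
    intro i j
    show pi0 K (AdjoinRoot.of _ (M i j)) = M i j
    exact pi0_of K _
  have hq : Nat.card (SpecialLinearGroup (Fin 2) (AdjoinRoot (X ^ 2 - C (0 : K)))) =
      Nat.card (SpecialLinearGroup (Fin 2) K) * Nat.card πm.ker := by
    rw [Subgroup.card_eq_card_quotient_mul_card_subgroup πm.ker]
    congr 1
    exact Nat.card_congr (QuotientGroup.quotientKerEquivOfSurjective πm hsurj).toEquiv
  have hker : Nat.card πm.ker = Fintype.card K ^ 3 := by
    have hbij : Function.Bijective (fun t : K × K × K => (⟨kerParam K t, kerParam_mem K t⟩ : πm.ker)) := by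
      constructor
      · intro t t' h
        have h2 : kerParam K t = kerParam K t' := congrArg Subtype.val h
        have key : ∀ a b : K,
            AdjoinRoot.root (X ^ 2 - C (0 : K)) * AdjoinRoot.of _ a =
              AdjoinRoot.root (X ^ 2 - C (0 : K)) * AdjoinRoot.of _ b → a = b := by
          intro a b hab
          have : AdjoinRoot.root (X ^ 2 - C (0 : K)) * AdjoinRoot.of _ (a - b) = 0 := by
            rw [map_sub, mul_sub, hab, sub_self]
          have := cancel_root (0 : K) this
          exact sub_eq_zero.mp this
        have e00 := congrArg (fun P : SpecialLinearGroup (Fin 2) (AdjoinRoot (X ^ 2 - C (0:K))) =>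
          P.1 0 0) h2
        have e01 := congrArg (fun P : SpecialLinearGroup (Fin 2) (AdjoinRoot (X ^ 2 - C (0:K))) =>
          P.1 0 1) h2
        have e10 := congrArg (fun P : SpecialLinearGroup (Fin 2) (AdjoinRoot (X ^ 2 - C (0:K))) =>
          P.1 1 0) h2
        simp only [kerParam, Matrix.cons_val', Matrix.cons_val_zero, Matrix.cons_val_one,
          Matrix.head_cons, Matrix.head_fin_const, Matrix.empty_val', Matrix.cons_val_fin_one,
          Matrix.of_apply] at e00 e01 e10
        have ht1 : t.1 = t'.1 := key _ _ (by linear_combination e00)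
        have ht2 : t.2.1 = t'.2.1 := key _ _ (by linear_combination e01)
        have ht3 : t.2.2 = t'.2.2 := key _ _ (by linear_combination e10)
        exact Prod.ext ht1 (Prod.ext ht2 ht3)
      · rintro ⟨M, hM⟩
        have hdec := fun i j => decomp (0 : K) (M.1 i j)
        choose A B hAB using hdec
        have hA : ∀ i j, A i j = (1 : Matrix (Fin 2) (Fin 2) K) i j := by
          intro i j
          have h1 := congrArg (fun P : SpecialLinearGroup (Fin 2) K =>
            P.1 i j) hM
          have h2 : pi0 K (M.1 i j)
              = (1 : Matrix (Fin 2) (Fin 2) K) i j := h1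
          rw [hAB i j] at h2
          simpa [pi0_of, pi0_root] using h2
        have hx2 := root_sq0 K
        have hdet : Matrix.det (M.1 : Matrix (Fin 2) (Fin 2) (AdjoinRoot (X ^ 2 - C (0:K)))) = 1 := M.2
        rw [det_fin_two] at hdet
        rw [hAB 0 0, hAB 0 1, hAB 1 0, hAB 1 1, hA 0 0, hA 0 1, hA 1 0, hA 1 1] at hdet
        simp only [Matrix.one_apply_eq, Matrix.one_apply_ne (by decide : (0 : Fin 2) ≠ 1),
          Matrix.one_apply_ne (by decide : (1 : Fin 2) ≠ 0), _root_.map_one, _root_.map_zero,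
          zero_add] at hdet
        have hsum : AdjoinRoot.root (X ^ 2 - C (0 : K)) * AdjoinRoot.of _ (B 0 0 + B 1 1) = 0 := by
          rw [map_add]
          linear_combination hdet - (AdjoinRoot.of (X ^ 2 - C (0:K)) (B 0 0) *
            AdjoinRoot.of (X ^ 2 - C (0:K)) (B 1 1) - AdjoinRoot.of (X ^ 2 - C (0:K)) (B 0 1) *
            AdjoinRoot.of (X ^ 2 - C (0:K)) (B 1 0)) * hx2
        have hB11 : B 1 1 = - B 0 0 := by
          have := cancel_root (0 : K) hsum
          linear_combination this
        refine ⟨(B 0 0, B 0 1, B 1 0), ?_⟩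
        apply Subtype.ext
        apply Matrix.SpecialLinearGroup.ext
        intro i j
        show (kerParam K _).1 i j = M.1 i j
        rw [hAB i j, hA i j]
        fin_cases i <;> fin_cases j <;>
          simp [kerParam, Matrix.one_apply, hB11, map_neg] <;> ring
    rw [← Nat.card_eq_of_bijective _ hbij]
    simp [Nat.card_eq_fintype_card, pow_succ]
    ring
  rw [hq, hker]
  ring

end Case0

theorem finrank_adjoinRoot (d : K) :
    Module.finrank K (AdjoinRoot (X ^ 2 - C d)) = 2 := by
  have hm : (X ^ 2 - C d).Monic := monic_X_pow_sub_C d two_ne_zero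
  rw [Module.finrank_eq_card_basis (AdjoinRoot.powerBasisAux' hm)]
  simp [natDegree_X_pow_sub_C]

theorem card_SL2_case1 [Fintype K] (h2 : (2 : K) ≠ 0) {d e : K} (he : e ≠ 0)
    (hde : e ^ 2 = d) :
    Nat.card (SpecialLinearGroup (Fin 2) (AdjoinRoot (X ^ 2 - C d))) =
      Nat.card (SpecialLinearGroup (Fin 2) K) ^ 2 := by
  have hm : (X ^ 2 - C d).Monic := monic_X_pow_sub_C d two_ne_zero
  haveI : Module.Finite K (AdjoinRoot (X ^ 2 - C d)) :=
    Module.Finite.of_basis (AdjoinRoot.powerBasisAux' hm)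
  have h1 : aeval e (X ^ 2 - C d) = 0 := by
    rw [map_sub, map_pow, aeval_X, aeval_C, hde]
    simp
  have h1' : aeval (-e) (X ^ 2 - C d) = 0 := by
    rw [map_sub, map_pow, aeval_X, aeval_C, neg_sq, hde]
    simp
  set φ₁ := AdjoinRoot.liftAlgHom (X ^ 2 - C d) (Algebra.ofId K K) e (by refine Eq.trans ?_ h1; rfl) with hφ₁
  set φ₂ := AdjoinRoot.liftAlgHom (X ^ 2 - C d) (Algebra.ofId K K) (-e) (by refine Eq.trans ?_ h1'; rfl) with hφ₂
  set ψ : AdjoinRoot (X ^ 2 - C d) →ₐ[K] K × K := φ₁.prod φ₂ with hψ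
  have hof : ∀ (φ : AdjoinRoot (X ^ 2 - C d) →ₐ[K] K) (c : K),
      φ (AdjoinRoot.of _ c) = c := by
    intro φ c
    rw [← AdjoinRoot.algebraMap_eq, AlgHom.commutes]
    simp
  have hsurj : Function.Surjective ψ := by
    rintro ⟨a, b⟩
    refine ⟨AdjoinRoot.of _ ((a + b) / 2) + AdjoinRoot.root _ *
      AdjoinRoot.of _ ((a - b) / (2 * e)), ?_⟩
    refine Prod.ext ?_ ?_
    · show φ₁ _ = a
      rw [map_add, _root_.map_mul, hof, hof, hφ₁, AdjoinRoot.liftAlgHom_root]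
      field_simp
      ring
    · show φ₂ _ = b
      rw [map_add, _root_.map_mul, hof, hof, hφ₂, AdjoinRoot.liftAlgHom_root]
      field_simp
      ring
  have hfr : Module.finrank K (AdjoinRoot (X ^ 2 - C d)) = Module.finrank K (K × K) := by
    rw [finrank_adjoinRoot]
    simp
  have hinj : Function.Injective ψ :=
    (LinearMap.injective_iff_surjective_of_finrank_eq_finrank
      (f := ψ.toLinearMap) hfr).mpr hsurj
  have E := (AlgEquiv.ofBijective ψ ⟨hinj, hsurj⟩).toRingEquiv
  calc Nat.card (SpecialLinearGroup (Fin 2) (AdjoinRoot (X ^ 2 - C d)))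
      = Nat.card (SpecialLinearGroup (Fin 2) (K × K)) :=
        Nat.card_congr (mapEquiv E).toEquiv
    _ = Nat.card (SpecialLinearGroup (Fin 2) K × SpecialLinearGroup (Fin 2) K) :=
        Nat.card_congr (prodEquiv K K).toEquiv
    _ = Nat.card (SpecialLinearGroup (Fin 2) K) ^ 2 := by
        rw [Nat.card_prod]
        ring

theorem card_SL2_case2 [Fintype K] {d : K} (hd : ¬IsSquare d) :
    Nat.card (SpecialLinearGroup (Fin 2) (AdjoinRoot (X ^ 2 - C d))) =
      (Fintype.card K ^ 2) ^ 3 - Fintype.card K ^ 2 := by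
  have hirr : Irreducible (X ^ 2 - C d) :=
    X_pow_sub_C_irreducible_of_prime Nat.prime_two
      (fun b hb => hd ⟨b, by rw [← hb]; ring⟩)
  haveI := Fact.mk hirr
  haveI : Finite (AdjoinRoot (X ^ 2 - C d)) := finite_adjoinRoot K d
  haveI : Fintype (AdjoinRoot (X ^ 2 - C d)) := Fintype.ofFinite _
  have hm : (X ^ 2 - C d).Monic := monic_X_pow_sub_C d two_ne_zero
  haveI : Module.Finite K (AdjoinRoot (X ^ 2 - C d)) :=
    Module.Finite.of_basis (AdjoinRoot.powerBasisAux' hm)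
  haveI := Classical.decEq (AdjoinRoot (X ^ 2 - C d))
  have hcard : Fintype.card (AdjoinRoot (X ^ 2 - C d)) = Fintype.card K ^ 2 := by
    rw [Module.card_eq_pow_finrank (K := K), finrank_adjoinRoot]
  rw [card_SL2, hcard]

end SL2Aux


open SL2Aux

/-- Let `p` be an odd prime and `D` an integer, and let `R = (ℤ/pℤ)[x]/(x² − D)`.  Then the
image of `SL₂(ℤ/pℤ)` in `SL₂(R)`, under the group homomorphism induced by the canonical ring
homomorphism `ℤ/pℤ → R`, has index `p³ − (D/p)·p`, where `(D/p)` is the Legendre symbol. -/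
theorem index_range_SL2_quadratic (p : ℕ) [Fact p.Prime] (hodd : Odd p) (D : ℤ) :
    ((Matrix.SpecialLinearGroup.map (n := Fin 2)
        (AdjoinRoot.of (X ^ 2 - C (D : ZMod p)))).range.index : ℤ)
      = (p : ℤ) ^ 3 - legendreSym p D * p := by
  have hp : p.Prime := Fact.out
  have hp3 : 3 ≤ p := by
    obtain ⟨k, hk⟩ := hodd
    have := hp.two_le
    omega
  haveI : Finite (AdjoinRoot (X ^ 2 - C (D : ZMod p))) := finite_adjoinRoot _ _
  have hdeg : (X ^ 2 - C (D : ZMod p)).degree ≠ 0 := by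
    rw [degree_X_pow_sub_C (by norm_num : 0 < 2)]
    norm_num
  have hinj : Function.Injective
      (Matrix.SpecialLinearGroup.map (n := Fin 2) (AdjoinRoot.of (X ^ 2 - C (D : ZMod p)))) :=
    map_inj (AdjoinRoot.of.injective_of_degree_ne_zero hdeg)
  have hSLp : Nat.card (SpecialLinearGroup (Fin 2) (ZMod p)) = p ^ 3 - p := by
    rw [card_SL2, ZMod.card]
  have hkey : (p ^ 3 - p) *
      (Matrix.SpecialLinearGroup.map (n := Fin 2)
        (AdjoinRoot.of (X ^ 2 - C (D : ZMod p)))).range.index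
      = Nat.card (SpecialLinearGroup (Fin 2) (AdjoinRoot (X ^ 2 - C (D : ZMod p)))) := by
    rw [← Subgroup.card_mul_index (H := (Matrix.SpecialLinearGroup.map (n := Fin 2)
        (AdjoinRoot.of (X ^ 2 - C (D : ZMod p)))).range)]
    congr 1
    rw [← hSLp]
    exact Nat.card_congr (MonoidHom.ofInjective hinj).toEquiv
  have hpp : 0 < p ^ 3 - p := by
    have : p ^ 1 < p ^ 3 := Nat.pow_lt_pow_right (by omega) (by omega)
    simp only [pow_one] at this
    omega
  by_cases hd0 : (D : ZMod p) = 0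
  · have hleg : legendreSym p D = 0 := (legendreSym.eq_zero_iff p D).mpr hd0
    have hcR : Nat.card (SpecialLinearGroup (Fin 2) (AdjoinRoot (X ^ 2 - C (D : ZMod p)))) =
        p ^ 3 * (p ^ 3 - p) := by
      rw [hd0, card_SL2_case0, ZMod.card, hSLp]
    rw [hcR] at hkey
    have : (Matrix.SpecialLinearGroup.map (n := Fin 2)
        (AdjoinRoot.of (X ^ 2 - C (D : ZMod p)))).range.index = p ^ 3 :=
      Nat.eq_of_mul_eq_mul_left hpp (by rw [hkey]; ring)
    rw [this, hleg]
    push_cast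
    ring
  · by_cases hsq : IsSquare ((D : ZMod p))
    · have hleg : legendreSym p D = 1 := (legendreSym.eq_one_iff p hd0).mpr hsq
      obtain ⟨e, he⟩ := hsq
      have he0 : e ≠ 0 := by
        rintro rfl
        rw [mul_zero] at he
        exact hd0 he
      have h2 : (2 : ZMod p) ≠ 0 := by
        intro h
        have h' : ((2 : ℕ) : ZMod p) = 0 := by exact_mod_cast h
        have := (ZMod.natCast_eq_zero_iff 2 p).mp h'
        have := Nat.le_of_dvd (by norm_num) this
        omega
      rw [card_SL2_case1 h2 he0 (by rw [he]; ring), hSLp] at hkey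
      have : (Matrix.SpecialLinearGroup.map (n := Fin 2)
          (AdjoinRoot.of (X ^ 2 - C (D : ZMod p)))).range.index = p ^ 3 - p :=
        Nat.eq_of_mul_eq_mul_left hpp (by rw [hkey]; ring)
      rw [this, hleg]
      have hple : p ≤ p ^ 3 := Nat.le_self_pow (by norm_num) p
      push_cast [hple]
      ring
    · have hleg : legendreSym p D = -1 := (legendreSym.eq_neg_one_iff p).mpr hsq
      rw [card_SL2_case2 hsq, ZMod.card] at hkey
      have harith : (p ^ 2) ^ 3 - p ^ 2 = (p ^ 3 - p) * (p ^ 3 + p) := by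
        have h1 : p ≤ p ^ 3 := Nat.le_self_pow (by norm_num) p
        have h2 : p ^ 2 ≤ (p ^ 2) ^ 3 := Nat.le_self_pow (by norm_num) _
        zify [h1, h2]
        ring
      rw [harith] at hkey
      have : (Matrix.SpecialLinearGroup.map (n := Fin 2)
          (AdjoinRoot.of (X ^ 2 - C (D : ZMod p)))).range.index = p ^ 3 + p :=
        Nat.eq_of_mul_eq_mul_left hpp hkey
      rw [this, hleg]
      push_cast
      ring
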